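/- Let n ≥ 1 and let x_1,…,x_N be unit vectors in ℝ^{n+1} (N ≥ 1). If Σ_{i=1}^{N−1} arccos⟨x_i, x_{i+1}⟩ < π, then the configuration is not dispersed; that is, there exists a nonzero vector y ∈ ℝ^{n+1} with ⟨x_i, y⟩ > 0 for all i = 1,…,N. Equivalently, if unit vectors x_1,…,x_N are dispersed, then every chain visiting all of them in some order has total angular length Σ arccos⟨x_{i_j}, x_{i_{j+1}}⟩ ≥ π. -/

import Mathlib

open Matrix Real BigOperators

local notation "⟪" x ", " y "⟫" => @inner ℝ _ _ x y

section ChainAux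

variable {V : Type*} [NormedAddCommGroup V] [InnerProductSpace ℝ V]

lemma my_norm_eq {u : V} {c : ℝ} (hc : 0 ≤ c) (h : ⟪u, u⟫ = c ^ 2) : ‖u‖ = c := by
  have h2 : ‖u‖ ^ 2 = c ^ 2 := by rw [← real_inner_self_eq_norm_sq, h]
  have h3 : (‖u‖ - c) * (‖u‖ + c) = 0 := by ring_nf; linarith
  rcases mul_eq_zero.1 h3 with h4 | h4
  · linarith
  · nlinarith [norm_nonneg u]

-- triangle inequality
lemma my_triangle {u v w : V} (hu : ‖u‖ = 1) (hv : ‖v‖ = 1) (hw : ‖w‖ = 1) :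
    Real.arccos ⟪u, w⟫ ≤ Real.arccos ⟪u, v⟫ + Real.arccos ⟪v, w⟫ := by
  set a := Real.arccos ⟪u, v⟫ with ha
  set b := Real.arccos ⟪v, w⟫ with hb
  by_cases hab : π ≤ a + b
  · exact le_trans (Real.arccos_le_pi _) hab
  push_neg at hab
  have ha0 : 0 ≤ a := Real.arccos_nonneg _
  have hb0 : 0 ≤ b := Real.arccos_nonneg _
  have hcs1 : |⟪u, v⟫| ≤ 1 := by
    simpa [hu, hv] using abs_real_inner_le_norm u v
  have hcs2 : |⟪v, w⟫| ≤ 1 := by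
    simpa [hv, hw] using abs_real_inner_le_norm v w
  have hca : Real.cos a = ⟪u, v⟫ :=
    Real.cos_arccos (neg_le_of_abs_le hcs1) (le_of_abs_le hcs1)
  have hcb : Real.cos b = ⟪v, w⟫ :=
    Real.cos_arccos (neg_le_of_abs_le hcs2) (le_of_abs_le hcs2)
  have hsa : Real.sin a = Real.sqrt (1 - ⟪u, v⟫ ^ 2) := Real.sin_arccos _
  have hsb : Real.sin b = Real.sqrt (1 - ⟪v, w⟫ ^ 2) := Real.sin_arccos _
  set r : V := u - ⟪u, v⟫ • v with hr
  set s : V := w - ⟪v, w⟫ • v with hs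
  have hvv : ⟪v, v⟫ = 1 := by rw [real_inner_self_eq_norm_mul_norm, hv]; ring
  have hrr : ⟪r, r⟫ = 1 - ⟪u, v⟫ ^ 2 := by
    simp only [hr, inner_sub_left, inner_sub_right, real_inner_smul_left,
      real_inner_smul_right, hvv, real_inner_comm v u]
    rw [real_inner_self_eq_norm_mul_norm, hu]; ring
  have hss : ⟪s, s⟫ = 1 - ⟪v, w⟫ ^ 2 := by
    simp only [hs, inner_sub_left, inner_sub_right, real_inner_smul_left,
      real_inner_smul_right, hvv, real_inner_comm v w]
    rw [real_inner_self_eq_norm_mul_norm, hw]; ring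
  have hnr : ‖r‖ = Real.sin a := by
    rw [hsa]; exact my_norm_eq (Real.sqrt_nonneg _) (by rw [hrr, Real.sq_sqrt]; nlinarith [abs_le.1 hcs1])
  have hns : ‖s‖ = Real.sin b := by
    rw [hsb]; exact my_norm_eq (Real.sqrt_nonneg _) (by rw [hss, Real.sq_sqrt]; nlinarith [abs_le.1 hcs2])
  have hrs : - (Real.sin a * Real.sin b) ≤ ⟪r, s⟫ := by
    have := abs_real_inner_le_norm r s
    rw [hnr, hns] at this
    have := neg_le_of_abs_le this
    linarith
  have hiw : ⟪u, w⟫ = ⟪u, v⟫ * ⟪v, w⟫ + ⟪r, s⟫ := by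
    simp only [hr, hs, inner_sub_left, inner_sub_right, real_inner_smul_left,
      real_inner_smul_right, hvv, real_inner_comm v u]
    ring
  have key : Real.cos (a + b) ≤ ⟪u, w⟫ := by
    rw [Real.cos_add, hca, hcb, hiw]; linarith
  have anti : Antitone Real.arccos := by
    intro p q h
    unfold Real.arccos
    have := Real.monotone_arcsin h
    linarith
  calc Real.arccos ⟪u, w⟫ ≤ Real.arccos (Real.cos (a + b)) := anti key
    _ = a + b := Real.arccos_cos (by linarith) (by linarith)

lemma my_geodesic {u v : V} (hu : ‖u‖ = 1) (hv : ‖v‖ = 1)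
    (hd : Real.arccos ⟪u, v⟫ < π) {t : ℝ} (ht0 : 0 ≤ t) (ht1 : t ≤ Real.arccos ⟪u, v⟫) :
    ∃ y : V, ‖y‖ = 1 ∧ Real.arccos ⟪u, y⟫ ≤ t ∧
      Real.arccos ⟪v, y⟫ ≤ Real.arccos ⟪u, v⟫ - t := by
  set d := Real.arccos ⟪u, v⟫ with hdd
  have huu : ⟪u, u⟫ = 1 := by rw [real_inner_self_eq_norm_mul_norm, hu]; ring
  have hvv : ⟪v, v⟫ = 1 := by rw [real_inner_self_eq_norm_mul_norm, hv]; ring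
  have hcs : |⟪u, v⟫| ≤ 1 := by simpa [hu, hv] using abs_real_inner_le_norm u v
  have hcd : Real.cos d = ⟪u, v⟫ :=
    Real.cos_arccos (neg_le_of_abs_le hcs) (le_of_abs_le hcs)
  rcases eq_or_lt_of_le ht0 with h0 | h0
  · refine ⟨u, hu, ?_, ?_⟩
    · rw [huu, Real.arccos_one]; exact ht0
    · rw [real_inner_comm, ← h0]; simp; exact hdd.ge
  rcases eq_or_lt_of_le ht1 with h1 | h1
  · refine ⟨v, hv, ?_, ?_⟩
    · rw [h1]
    · rw [hvv, Real.arccos_one]; linarith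
  -- now 0 < t < d < π
  have hdpos : 0 < d := lt_trans h0 h1
  have hsd : Real.sin d = Real.sqrt (1 - ⟪u, v⟫ ^ 2) := Real.sin_arccos _
  have hsdpos : 0 < Real.sin d := Real.sin_pos_of_pos_of_lt_pi hdpos hd
  set c := ⟪u, v⟫ with hc
  set w : V := (Real.sin d)⁻¹ • (v - c • u) with hw
  have hvu : ⟪v, u⟫ = c := by rw [real_inner_comm]
  have huw : ⟪u, w⟫ = 0 := by
    simp only [hw, real_inner_smul_right, inner_sub_right, real_inner_smul_right, huu]
    rw [← hc]; ring
  have hvw : ⟪v, w⟫ = Real.sin d := by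
    simp only [hw, real_inner_smul_right, inner_sub_right, real_inner_smul_right, hvv, hvu]
    have h2 : (1 : ℝ) - c ^ 2 = Real.sin d ^ 2 := by
      rw [hsd, Real.sq_sqrt]; nlinarith [abs_le.1 hcs]
    field_simp
    nlinarith
  have hww : ⟪w, w⟫ = 1 := by
    simp only [hw, real_inner_smul_left, real_inner_smul_right, inner_sub_left,
      inner_sub_right, huu, hvv, hvu]
    have h2 : (1 : ℝ) - c ^ 2 = Real.sin d ^ 2 := by
      rw [hsd, Real.sq_sqrt]; nlinarith [abs_le.1 hcs]
    field_simp
    nlinarith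
  have hwu : ⟪w, u⟫ = 0 := by rw [real_inner_comm]; exact huw
  refine ⟨Real.cos t • u + Real.sin t • w, ?_, ?_, ?_⟩
  · refine my_norm_eq zero_le_one ?_
    simp only [inner_add_left, inner_add_right, real_inner_smul_left, real_inner_smul_right,
      huu, huw, hww, hwu]
    nlinarith [Real.sin_sq_add_cos_sq t]
  · have : ⟪u, Real.cos t • u + Real.sin t • w⟫ = Real.cos t := by
      simp only [inner_add_right, real_inner_smul_right, huu, huw]; ring
    rw [this, Real.arccos_cos ht0 (by linarith)]
  · have : ⟪v, Real.cos t • u + Real.sin t • w⟫ = Real.cos (d - t) := by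
      simp only [inner_add_right, real_inner_smul_right, hvw, hvu]
      rw [Real.cos_sub, ← hcd]; ring
    rw [this, Real.arccos_cos (by linarith) (by linarith)]

lemma my_self_arccos {u : V} (hu : ‖u‖ = 1) : Real.arccos ⟪u, u⟫ = 0 := by
  have : ⟪u, u⟫ = 1 := by rw [real_inner_self_eq_norm_mul_norm, hu]; ring
  rw [this, Real.arccos_one]

lemma my_chain_tri (x : ℕ → V) (hx : ∀ i, ‖x i‖ = 1) :
    ∀ j i, i ≤ j → Real.arccos ⟪x i, x j⟫ ≤
      ∑ k ∈ Finset.Ico i j, Real.arccos ⟪x k, x (k + 1)⟫ := by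
  intro j
  induction j with
  | zero =>
    intro i hi
    interval_cases i
    simp [my_self_arccos (hx 0), hx]
  | succ j ih =>
    intro i hi
    rcases eq_or_lt_of_le hi with h | h
    · rw [h]; simp [my_self_arccos (hx (j + 1)), hx]
    · have hij : i ≤ j := Nat.lt_succ_iff.1 h
      rw [Finset.sum_Ico_succ_top hij]
      calc Real.arccos ⟪x i, x (j + 1)⟫
          ≤ Real.arccos ⟪x i, x j⟫ + Real.arccos ⟪x j, x (j + 1)⟫ :=
            my_triangle (hx i) (hx j) (hx (j + 1))
        _ ≤ _ := by linarith [ih i hij]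

lemma my_mid (x : ℕ → V) (hx : ∀ i, ‖x i‖ = 1) :
    ∀ M : ℕ, (∀ i < M, Real.arccos ⟪x i, x (i + 1)⟫ < π) →
    ∀ t : ℝ, 0 ≤ t → t ≤ ∑ k ∈ Finset.range M, Real.arccos ⟪x k, x (k + 1)⟫ →
    ∃ y : V, ‖y‖ = 1 ∧ ∀ i ≤ M, Real.arccos ⟪x i, y⟫ ≤
      |(∑ k ∈ Finset.range i, Real.arccos ⟪x k, x (k + 1)⟫) - t| := by
  intro M
  induction M with
  | zero =>
    intro _ t ht0 ht1
    simp only [Finset.range_zero, Finset.sum_empty] at ht1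
    have ht : t = 0 := le_antisymm ht1 ht0
    refine ⟨x 0, hx 0, ?_⟩
    intro i hi
    interval_cases i
    simp [my_self_arccos (hx 0), ht, hx]
  | succ M ih =>
    intro hsteps t ht0 ht1
    set S : ℕ → ℝ := fun k => ∑ j ∈ Finset.range k, Real.arccos ⟪x j, x (j + 1)⟫ with hS
    have hstep_nonneg : ∀ k, 0 ≤ Real.arccos ⟪x k, x (k + 1)⟫ := fun k => Real.arccos_nonneg _
    have hSmono : ∀ i j, i ≤ j → S i ≤ S j := by
      intro i j hij
      exact Finset.sum_le_sum_of_subset_of_nonneg (Finset.range_subset_range.2 hij)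
        (fun k _ _ => hstep_nonneg k)
    have hSsucc : S (M + 1) = S M + Real.arccos ⟪x M, x (M + 1)⟫ := Finset.sum_range_succ _ _
    have hS0 : ∀ i, 0 ≤ S i := fun i => Finset.sum_nonneg (fun k _ => hstep_nonneg k)
    by_cases hcase : t ≤ S M
    · obtain ⟨y, hy1, hy2⟩ := ih (fun i hi => hsteps i (Nat.lt_succ_of_lt hi)) t ht0 hcase
      refine ⟨y, hy1, ?_⟩
      intro i hi
      rcases eq_or_lt_of_le hi with h | h
      · subst h
        have htr := my_triangle (hx (M + 1)) (hx M) hy1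
        have hcomm : Real.arccos ⟪x (M + 1), x M⟫ = Real.arccos ⟪x M, x (M + 1)⟫ := by
          rw [real_inner_comm]
        have hM := hy2 M le_rfl
        have habsM : |S M - t| = S M - t := abs_of_nonneg (by linarith)
        have habs : |S (M + 1) - t| = S (M + 1) - t := abs_of_nonneg (by
          have := hSmono M (M + 1) (Nat.le_succ M); linarith)
        rw [habs]
        rw [habsM] at hM
        rw [hcomm] at htr
        linarith [htr, hSsucc.ge]
      · exact hy2 i (Nat.lt_succ_iff.1 h)
    · push_neg at hcase
      have hdlt : Real.arccos ⟪x M, x (M + 1)⟫ < π := hsteps M (Nat.lt_succ_self M)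
      have ht1S : t ≤ S (M + 1) := ht1
      have ht1' : t - S M ≤ Real.arccos ⟪x M, x (M + 1)⟫ := by
        rw [hSsucc] at ht1S; linarith
      obtain ⟨y, hy1, hy2, hy3⟩ := my_geodesic (hx M) (hx (M + 1)) hdlt
        (le_of_lt (sub_pos.2 hcase)) ht1'
      refine ⟨y, hy1, ?_⟩
      intro i hi
      rcases eq_or_lt_of_le hi with h | h
      · subst h
        have habs : |S (M + 1) - t| = S (M + 1) - t := abs_of_nonneg (by linarith [ht1S])
        rw [habs, hSsucc]
        linarith
      · have hiM : i ≤ M := Nat.lt_succ_iff.1 h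
        have htr := my_triangle (hx i) (hx M) hy1
        have hchain := my_chain_tri x hx M i hiM
        have hico : ∑ k ∈ Finset.Ico i M, Real.arccos ⟪x k, x (k + 1)⟫ = S M - S i := by
          rw [hS]
          rw [← Finset.sum_Ico_eq_sub _ hiM]
        have hSi : S i ≤ S M := hSmono i M hiM
        have habs : |S i - t| = t - S i := by
          rw [abs_sub_comm]; exact abs_of_nonneg (by linarith)
        rw [habs]
        rw [hico] at hchain
        linarith

lemma my_main (x : ℕ → V) (hx : ∀ i, ‖x i‖ = 1) (M : ℕ)
    (hsum : ∑ k ∈ Finset.range M, Real.arccos ⟪x k, x (k + 1)⟫ < π) :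
    ∃ y : V, ‖y‖ = 1 ∧ ∀ i ≤ M, 0 < ⟪x i, y⟫ := by
  set L := ∑ k ∈ Finset.range M, Real.arccos ⟪x k, x (k + 1)⟫ with hL
  have hstep_nonneg : ∀ k, 0 ≤ Real.arccos ⟪x k, x (k + 1)⟫ := fun k => Real.arccos_nonneg _
  have hL0 : 0 ≤ L := Finset.sum_nonneg (fun k _ => hstep_nonneg k)
  have hsteps : ∀ i < M, Real.arccos ⟪x i, x (i + 1)⟫ < π := by
    intro i hi
    calc Real.arccos ⟪x i, x (i + 1)⟫
        ≤ L := Finset.single_le_sum (fun k _ => hstep_nonneg k) (Finset.mem_range.2 hi)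
      _ < π := hsum
  obtain ⟨y, hy1, hy2⟩ := my_mid x hx M hsteps (L / 2) (by linarith) (by linarith)
  refine ⟨y, hy1, ?_⟩
  intro i hi
  have hb := hy2 i hi
  have hS0 : 0 ≤ ∑ k ∈ Finset.range i, Real.arccos ⟪x k, x (k + 1)⟫ :=
    Finset.sum_nonneg (fun k _ => hstep_nonneg k)
  have hSL : (∑ k ∈ Finset.range i, Real.arccos ⟪x k, x (k + 1)⟫) ≤ L :=
    Finset.sum_le_sum_of_subset_of_nonneg (Finset.range_subset_range.2 hi)
      (fun k _ _ => hstep_nonneg k)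
  have habs : |(∑ k ∈ Finset.range i, Real.arccos ⟪x k, x (k + 1)⟫) - L / 2| ≤ L / 2 :=
    abs_le.2 ⟨by linarith, by linarith⟩
  have : Real.arccos ⟪x i, y⟫ < π / 2 := by
    have hpi : L / 2 < π / 2 := by linarith
    linarith
  exact Real.arccos_lt_pi_div_two.1 this

end ChainAux

lemma my_dot {m : ℕ} (u v : Fin m → ℝ) :
    u ⬝ᵥ v = ⟪(WithLp.equiv 2 (Fin m → ℝ)).symm u, (WithLp.equiv 2 (Fin m → ℝ)).symm v⟫ := by
  rw [PiLp.inner_apply]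
  simp [dotProduct, RCLike.inner_apply, mul_comm]

open Fin.NatCast in
lemma my_fin_main {n M : ℕ} (x : Fin (M + 1) → EuclideanSpace ℝ (Fin (n + 1)))
    (hx : ∀ i, ‖x i‖ = 1)
    (hsum : (∑ i : Fin M, Real.arccos ⟪x i.castSucc, x i.succ⟫) < π) :
    ∃ y : EuclideanSpace ℝ (Fin (n + 1)), ‖y‖ = 1 ∧ ∀ i, 0 < ⟪x i, y⟫ := by
  set x' : ℕ → EuclideanSpace ℝ (Fin (n + 1)) := fun k => x (k : Fin (M + 1)) with hx'def
  have hx' : ∀ k, ‖x' k‖ = 1 := fun k => hx _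
  have hconv : (∑ k ∈ Finset.range M, Real.arccos ⟪x' k, x' (k + 1)⟫) =
      ∑ i : Fin M, Real.arccos ⟪x i.castSucc, x i.succ⟫ := by
    rw [← Fin.sum_univ_eq_sum_range]
    apply Finset.sum_congr rfl
    intro i _
    have e1 : (((i : ℕ) : ℕ) : Fin (M + 1)) = i.castSucc :=
      Fin.ext (by simp [Fin.val_cast_of_lt (Nat.lt_succ_of_lt i.isLt)])
    have e2 : ((((i : ℕ) + 1) : ℕ) : Fin (M + 1)) = i.succ :=
      Fin.ext (by simp [Fin.val_cast_of_lt (Nat.succ_lt_succ i.isLt)])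
    have h1 : x' (i : ℕ) = x i.castSucc := by simp only [hx'def]; rw [e1]
    have h2 : x' ((i : ℕ) + 1) = x i.succ := by simp only [hx'def]; rw [e2]
    rw [h1, h2]
  obtain ⟨y, hy1, hy2⟩ := my_main x' hx' M (by rw [hconv]; exact hsum)
  refine ⟨y, hy1, ?_⟩
  intro i
  have := hy2 i.val (Nat.lt_succ_iff.1 i.isLt)
  have hxi : x' i.val = x i := by
    simp [hx'def, Fin.cast_val_eq_self]
  rwa [hxi] at this

/-- If the chain `x₀, x₁, …, x_M` of unit vectors in `ℝ^{n+1}` has total angular length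
`Σ arccos⟨xᵢ, xᵢ₊₁⟩ < π`, then the configuration is not dispersed: there is a nonzero
`y` with `⟨xᵢ, y⟩ > 0` for all `i`.  Equivalently, at a dispersed configuration every
chain visiting all the points in some order has total angular length at least `π`. -/
theorem chain_shorter_than_pi_not_dispersed
    {n M : ℕ} (hn : 1 ≤ n)
    (x : Fin (M + 1) → Fin (n + 1) → ℝ) (hunit : ∀ i, x i ⬝ᵥ x i = 1) :
    ((∑ i : Fin M, Real.arccos (x i.castSucc ⬝ᵥ x i.succ)) < π →
      ∃ y : Fin (n + 1) → ℝ, y ≠ 0 ∧ ∀ i, 0 < x i ⬝ᵥ y) ∧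
    ((¬ ∃ y : Fin (n + 1) → ℝ, y ≠ 0 ∧ ∀ i, 0 < x i ⬝ᵥ y) →
      ∀ σ : Equiv.Perm (Fin (M + 1)),
        π ≤ ∑ i : Fin M, Real.arccos (x (σ i.castSucc) ⬝ᵥ x (σ i.succ))) := by
  set X : Fin (M + 1) → EuclideanSpace ℝ (Fin (n + 1)) :=
    fun i => (WithLp.equiv 2 (Fin (n + 1) → ℝ)).symm (x i) with hX
  have hdot : ∀ i j, x i ⬝ᵥ x j = ⟪X i, X j⟫ := fun i j => my_dot _ _
  have hXnorm : ∀ i, ‖X i‖ = 1 := by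
    intro i
    apply my_norm_eq zero_le_one
    rw [← hdot i i, hunit i]; norm_num
  have extract : ∀ y : EuclideanSpace ℝ (Fin (n + 1)), ‖y‖ = 1 →
      ∃ z : Fin (n + 1) → ℝ, z ≠ 0 ∧ ∀ i, x i ⬝ᵥ z = ⟪X i, y⟫ := by
    intro y hy
    refine ⟨WithLp.equiv 2 (Fin (n + 1) → ℝ) y, ?_, ?_⟩
    · intro h
      have hy0 : y = 0 := by
        have := congrArg (WithLp.equiv 2 (Fin (n + 1) → ℝ)).symm h
        rw [Equiv.symm_apply_apply] at this
        simpa using this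
      rw [hy0] at hy; simp at hy
    · intro i
      rw [my_dot, Equiv.symm_apply_apply]
  constructor
  · intro hsum
    have hsum' : (∑ i : Fin M, Real.arccos ⟪X i.castSucc, X i.succ⟫) < π := by
      have : (∑ i : Fin M, Real.arccos ⟪X i.castSucc, X i.succ⟫) =
          ∑ i : Fin M, Real.arccos (x i.castSucc ⬝ᵥ x i.succ) :=
        Finset.sum_congr rfl (fun i _ => by rw [hdot])
      rw [this]; exact hsum
    obtain ⟨y, hy1, hy2⟩ := my_fin_main X hXnorm hsum'
    obtain ⟨z, hz1, hz2⟩ := extract y hy1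
    exact ⟨z, hz1, fun i => by rw [hz2 i]; exact hy2 i⟩
  · intro hnot σ
    by_contra hlt
    push_neg at hlt
    have hsum' : (∑ i : Fin M, Real.arccos ⟪X (σ i.castSucc), X (σ i.succ)⟫) < π := by
      have : (∑ i : Fin M, Real.arccos ⟪X (σ i.castSucc), X (σ i.succ)⟫) =
          ∑ i : Fin M, Real.arccos (x (σ i.castSucc) ⬝ᵥ x (σ i.succ)) :=
        Finset.sum_congr rfl (fun i _ => by rw [hdot])
      rw [this]; exact hlt
    obtain ⟨y, hy1, hy2⟩ := my_fin_main (fun i => X (σ i)) (fun i => hXnorm _) hsum'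
    obtain ⟨z, hz1, hz2⟩ := extract y hy1
    refine hnot ⟨z, hz1, fun j => ?_⟩
    have := hy2 (σ.symm j)
    rw [Equiv.apply_symm_apply] at this
    rw [hz2 j]; exact this
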